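/- Suppose f: [-1,1] → ℝ has an absolutely convergent Chebyshev expansion f(x) = a_0/2 + Σ_{k=1}^∞ a_k T_k(x), and let p_n^I be the degree-n interpolant of f at the Chebyshev points of the first kind x_j = cos((2j+1)π/(2n+2)), j = 0,…,n, written as p_n^I = b_0/2 + Σ_{k=1}^n b_k T_k. Then b_k = a_k + Σ_{ℓ=1}^{∞} (-1)^ℓ (a_{2ℓ(n+1)-k} + a_{2ℓ(n+1)+k}) for k = 0,1,…,n. -/

import Mathlib

open Real
open Finset

set_option maxHeartbeats 1000000

noncomputable def Ealias (N : ℕ) (q : ℤ) : ℝ :=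
  if (2 * (N : ℤ)) ∣ q then (-1 : ℝ) ^ (q / (2 * (N : ℤ))) else 0

lemma tele (N : ℕ) (β : ℝ) :
    ∑ j ∈ range N, (2 * Real.sin β * Real.cos ((2 * j + 1) * β)) = Real.sin (2 * N * β) := by
  induction N with
  | zero => simp
  | succ N ih =>
    rw [Finset.sum_range_succ, ih]
    push_cast
    rw [show (2 * ((N : ℝ) + 1)) * β = ((2 * N + 1) * β + β) by ring,
      show (2 * (N : ℝ)) * β = ((2 * N + 1) * β - β) by ring,
      Real.sin_add, Real.sin_sub]
    ring

lemma S_not_dvd (N : ℕ) (hN : 0 < N) (m : ℤ) (h : ¬ ((2 * (N : ℤ)) ∣ m)) :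
    ∑ j ∈ range N, Real.cos ((m : ℝ) * ((2 * j + 1) * π / (2 * N))) = 0 := by
  set β : ℝ := m * π / (2 * N) with hβ
  have hNR : (0:ℝ) < N := by exact_mod_cast hN
  have hsin : Real.sin β ≠ 0 := by
    intro hs
    rcases Real.sin_eq_zero_iff.1 hs with ⟨q, hq⟩
    apply h
    refine ⟨q, ?_⟩
    have hπ : π ≠ 0 := Real.pi_ne_zero
    have h1 : (m : ℝ) * π = q * π * (2 * N) := by
      rw [hβ] at hq
      field_simp at hq
      rw [← hq]; ring
    have : (m : ℝ) = 2 * N * q := by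
      have := mul_right_cancel₀ hπ (by linarith [h1] : (m:ℝ) * π = (2 * N * q) * π)
      exact this
    exact_mod_cast this
  have h2 : ∀ j ∈ range N, (m : ℝ) * ((2 * j + 1) * π / (2 * N)) = (2 * j + 1) * β := by
    intro j _
    rw [hβ]; field_simp
  rw [Finset.sum_congr rfl fun j hj => by rw [h2 j hj]]
  have key := tele N β
  have hsN : Real.sin (2 * N * β) = 0 := by
    have he : (2 * (N:ℝ) * β) = m * π := by rw [hβ]; field_simp
    rw [he]
    exact Real.sin_int_mul_pi m
  rw [← Finset.mul_sum, hsN] at key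
  rcases mul_eq_zero.1 key with h' | h'
  · exact absurd (by linarith : Real.sin β = 0) hsin
  · exact h'

lemma S_dvd (N : ℕ) (hN : 0 < N) (ℓ : ℕ) :
    ∑ j ∈ range N, Real.cos (((2 * ℓ * N : ℕ) : ℝ) * ((2 * j + 1) * π / (2 * N))) =
      N * (-1 : ℝ) ^ ℓ := by
  have hNR : (0:ℝ) < N := by exact_mod_cast hN
  have h1 : ∀ j ∈ range N, Real.cos (((2 * ℓ * N : ℕ) : ℝ) * ((2 * j + 1) * π / (2 * N)))
      = (-1 : ℝ) ^ ℓ := by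
    intro j _
    have he : ((2 * ℓ * N : ℕ) : ℝ) * ((2 * j + 1) * π / (2 * N))
        = ((ℓ * (2 * j + 1) : ℕ) : ℝ) * π := by
      push_cast; field_simp
    rw [he, show (((ℓ * (2 * j + 1) : ℕ)) : ℝ) * π = ((ℓ * (2 * j + 1) : ℕ) : ℝ) * π - 0 by ring,
      Real.cos_nat_mul_pi_sub]
    rw [Real.cos_zero, mul_one,
      show ℓ * (2 * j + 1) = ℓ + 2 * (ℓ * j) by ring, pow_add, pow_mul, neg_one_sq,
      one_pow, mul_one]
  rw [Finset.sum_congr rfl h1, Finset.sum_const, Finset.card_range, nsmul_eq_mul]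


lemma Ealias_of_eq (N : ℕ) (hN : 0 < N) (q t : ℤ) (hq : q = 2 * N * t) :
    Ealias N q = (-1 : ℝ) ^ t := by
  have h2N : (2 * (N : ℤ)) ≠ 0 := by positivity
  rw [Ealias, if_pos ⟨t, hq⟩, hq, Int.mul_ediv_cancel_left _ h2N]

lemma Ealias_of_not (N : ℕ) (q : ℤ) (h : ¬ (2 * (N : ℤ)) ∣ q) : Ealias N q = 0 := by
  rw [Ealias, if_neg h]

lemma abs_Ealias_le (N : ℕ) (q : ℤ) : |Ealias N q| ≤ 1 := by
  rw [Ealias]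
  split
  · rcases Int.even_or_odd (q / (2 * (N:ℤ))) with h | h
    · rw [h.neg_one_zpow]; norm_num
    · rw [h.neg_one_zpow]; norm_num
  · simp

lemma neg_one_pow_inv (m : ℕ) : ((-1 : ℝ) ^ m)⁻¹ = (-1 : ℝ) ^ m := by
  rcases Nat.even_or_odd m with h | h
  · rw [h.neg_one_pow]; norm_num
  · rw [h.neg_one_pow]; norm_num

lemma Sval (N : ℕ) (hN : 0 < N) (q : ℤ) :
    ∑ j ∈ range N, Real.cos ((q : ℝ) * ((2 * j + 1) * π / (2 * N))) = N * Ealias N q := by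
  by_cases hdvd : (2 * (N : ℤ)) ∣ q
  · obtain ⟨t, ht⟩ := hdvd
    rw [Ealias_of_eq N hN q t ht]
    rcases t with t' | t'
    all_goals try simp only [Int.ofNat_eq_natCast] at ht
    · have hc : (q : ℝ) = ((2 * t' * N : ℕ) : ℝ) := by rw [ht]; push_cast; ring
      rw [hc, S_dvd N hN t']
      norm_num
    · have hc : ∀ j ∈ range N, Real.cos ((q : ℝ) * ((2 * j + 1) * π / (2 * N)))
          = Real.cos (((2 * (t' + 1) * N : ℕ) : ℝ) * ((2 * j + 1) * π / (2 * N))) := by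
        intro j _
        rw [← Real.cos_neg (((2 * (t' + 1) * N : ℕ) : ℝ) * _), ← neg_mul]
        congr 1
        rw [ht]
        push_cast [Int.negSucc_eq]
        ring
      rw [Finset.sum_congr rfl hc, S_dvd N hN (t' + 1), zpow_negSucc, neg_one_pow_inv]
  · rw [Ealias_of_not N q hdvd, S_not_dvd N hN q hdvd, mul_zero]

lemma Ccos (N : ℕ) (hN : 0 < N) (k m : ℕ) :
    (2 / (N : ℝ)) * ∑ j ∈ range N,
        Real.cos ((m : ℝ) * ((2 * j + 1) * π / (2 * N))) *
          Real.cos ((k : ℝ) * ((2 * j + 1) * π / (2 * N))) =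
      Ealias N ((m : ℤ) + k) + Ealias N ((m : ℤ) - k) := by
  have hNR : ((N : ℝ)) ≠ 0 := by positivity
  have hterm : ∀ j ∈ range N,
      Real.cos ((m : ℝ) * ((2 * j + 1) * π / (2 * N))) *
        Real.cos ((k : ℝ) * ((2 * j + 1) * π / (2 * N)))
      = (Real.cos ((((m : ℤ) + k : ℤ) : ℝ) * ((2 * j + 1) * π / (2 * N)))
        + Real.cos ((((m : ℤ) - k : ℤ) : ℝ) * ((2 * j + 1) * π / (2 * N)))) / 2 := by
    intro j _
    have h1 : (((m : ℤ) + k : ℤ) : ℝ) * ((2 * j + 1) * π / (2 * N))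
        = (m : ℝ) * ((2 * j + 1) * π / (2 * N)) + (k : ℝ) * ((2 * j + 1) * π / (2 * N)) := by
      push_cast; ring
    have h2 : (((m : ℤ) - k : ℤ) : ℝ) * ((2 * j + 1) * π / (2 * N))
        = (m : ℝ) * ((2 * j + 1) * π / (2 * N)) - (k : ℝ) * ((2 * j + 1) * π / (2 * N)) := by
      push_cast; ring
    rw [h1, h2, Real.cos_add, Real.cos_sub]
    ring
  rw [Finset.sum_congr rfl hterm, ← Finset.sum_div, Finset.sum_add_distrib,
    Sval N hN ((m : ℤ) + k), Sval N hN ((m : ℤ) - k)]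
  field_simp

lemma not_dvd_bound (N : ℕ) (q : ℤ) (h0 : 0 < q) (hq : q < 2 * N) : ¬ (2 * (N : ℤ)) ∣ q :=
  fun hdvd => absurd (Int.le_of_dvd h0 hdvd) (by omega)

lemma summable_sign (a : ℕ → ℝ) (ha : Summable fun j => |a j|) {g : ℕ → ℕ}
    (hg : Function.Injective g) :
    Summable fun ℓ : ℕ => (-1 : ℝ) ^ (ℓ + 1) * a (g ℓ) := by
  apply Summable.of_norm_bounded (ha.comp_injective hg)
  intro ℓ
  simp [Real.norm_eq_abs, abs_mul, abs_pow, Function.comp]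

lemma summable_h (a : ℕ → ℝ) (ha : Summable fun j => |a j|) (N : ℕ) (k : ℕ) :
    Summable fun m : ℕ => a m * (Ealias N ((m : ℤ) + k) + Ealias N ((m : ℤ) - k)) := by
  apply Summable.of_norm_bounded (ha.mul_left 2)
  intro m
  rw [Real.norm_eq_abs, abs_mul]
  have h1 := abs_Ealias_le N ((m : ℤ) + k)
  have h2 := abs_Ealias_le N ((m : ℤ) - k)
  have h3 := abs_add_le (Ealias N ((m : ℤ) + k)) (Ealias N ((m : ℤ) - k))
  have h4 := abs_nonneg (a m)
  nlinarith

lemma inj_plus (N k : ℕ) (hN : 0 < N) :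
    Function.Injective (fun ℓ : ℕ => 2 * (ℓ + 1) * N + k) := by
  intro x y h
  simp only at h
  have h2 : 2 * (x + 1) * N = 2 * (y + 1) * N := by omega
  have := Nat.eq_of_mul_eq_mul_right hN h2
  omega

lemma inj_minus (N k : ℕ) (hkN : k < N) :
    Function.Injective (fun ℓ : ℕ => 2 * (ℓ + 1) * N - k) := by
  intro x y h
  simp only at h
  have hx : N ≤ 2 * (x + 1) * N := Nat.le_mul_of_pos_left N (by omega)
  have hy : N ≤ 2 * (y + 1) * N := Nat.le_mul_of_pos_left N (by omega)
  have h2 : 2 * (x + 1) * N = 2 * (y + 1) * N := by omega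
  have := Nat.eq_of_mul_eq_mul_right (by omega : 0 < N) h2
  omega

lemma tsum_h_pos (a : ℕ → ℝ) (ha : Summable fun j => |a j|) (N k : ℕ)
    (hk1 : 1 ≤ k) (hkN : k < N) :
    ∑' m : ℕ, a m * (Ealias N ((m : ℤ) + k) + Ealias N ((m : ℤ) - k))
      = a k + ∑' ℓ : ℕ, (-1 : ℝ) ^ (ℓ + 1) *
          (a (2 * (ℓ + 1) * N - k) + a (2 * (ℓ + 1) * N + k)) := by
  have hN : 0 < N := by omega
  set h : ℕ → ℝ := fun m => a m * (Ealias N ((m : ℤ) + k) + Ealias N ((m : ℤ) - k)) with hh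
  set i : ℕ → ℕ := fun q => if q % 2 = 0 then N * q + k else N * (q + 1) - k with hi
  -- values of i
  have hie : ∀ ℓ : ℕ, i (2 * ℓ) = N * (2 * ℓ) + k := by
    intro ℓ; simp only [hi]; rw [if_pos (by omega)]
  have hio : ∀ ℓ : ℕ, i (2 * ℓ + 1) = N * (2 * ℓ + 2) - k := by
    intro ℓ; simp only [hi]; rw [if_neg (by omega)]
  -- i is strictly monotone
  have himono : StrictMono i := by
    apply strictMono_nat_of_lt_succ
    intro q
    rcases Nat.even_or_odd q with ⟨t, rfl⟩ | ⟨t, rfl⟩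
    · rw [show t + t = 2 * t by ring, hie t, show 2 * t + 1 = 2 * t + 1 from rfl, hio t]
      have e : N * (2 * t + 2) = N * (2 * t) + 2 * N := by ring
      omega
    · rw [show 2 * t + 1 + 1 = 2 * (t + 1) by ring, hio t, hie (t + 1)]
      have e : N * (2 * (t + 1)) = N * (2 * t + 2) := by ring
      omega
  have hiinj : Function.Injective i := himono.injective
  -- support of h is contained in range of i
  have hsupp : Function.support h ⊆ Set.range i := by
    intro m hm
    simp only [Function.mem_support, hh] at hm
    have hE : Ealias N ((m : ℤ) + k) ≠ 0 ∨ Ealias N ((m : ℤ) - k) ≠ 0 := by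
      by_contra hc
      push_neg at hc
      rw [hc.1, hc.2] at hm
      simp at hm
    rcases hE with hE | hE
    · -- 2N ∣ m + k
      have hdvd : (2 * (N : ℤ)) ∣ ((m : ℤ) + k) := by
        by_contra hc; exact hE (Ealias_of_not N _ hc)
      have hdvd' : (2 * N) ∣ (m + k) := by
        have : ((2 * N : ℕ) : ℤ) ∣ (((m + k : ℕ)) : ℤ) := by push_cast; exact hdvd
        exact_mod_cast this
      obtain ⟨t, ht⟩ := hdvd'
      rcases t with _ | t'
      · omega
      · refine ⟨2 * t' + 1, ?_⟩
        rw [hio t']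
        have e : N * (2 * t' + 2) = 2 * N * (t' + 1) := by ring
        omega
    · -- 2N ∣ m - k
      have hdvd : (2 * (N : ℤ)) ∣ ((m : ℤ) - k) := by
        by_contra hc; exact hE (Ealias_of_not N _ hc)
      rcases lt_or_ge m k with hmk | hmk
      · -- impossible: 0 < k - m < 2N and 2N ∣ k - m
        exfalso
        have hdvd2 : (2 * (N : ℤ)) ∣ ((k : ℤ) - m) := by
          have := dvd_neg.2 hdvd
          rwa [neg_sub] at this
        have hle : (2 * (N : ℤ)) ≤ (k : ℤ) - m := Int.le_of_dvd (by omega) hdvd2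
        omega
      · have hdvd' : (2 * N) ∣ (m - k) := by
          have : ((2 * N : ℕ) : ℤ) ∣ (((m - k : ℕ)) : ℤ) := by
            rw [Nat.cast_sub hmk]; push_cast; exact hdvd
          exact_mod_cast this
        obtain ⟨t, ht⟩ := hdvd'
        rcases t with _ | t'
        · refine ⟨0, ?_⟩
          rw [hie 0]  -- i 0 = N * 0 + k
          omega
        · refine ⟨2 * (t' + 1), ?_⟩
          rw [hie (t' + 1)]
          have e : N * (2 * (t' + 1)) = 2 * N * (t' + 1) := by ring
          omega
  have Sh : Summable h := summable_h a ha N k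
  have Se : Summable fun ℓ : ℕ => h (i (2 * ℓ)) :=
    Sh.comp_injective (hiinj.comp fun x y hxy => by omega)
  have So : Summable fun ℓ : ℕ => h (i (2 * ℓ + 1)) :=
    Sh.comp_injective (hiinj.comp fun x y hxy => by omega)
  have hval0 : h (i 0) = a k := by
    have hi0 : i 0 = k := by simp [hi]
    rw [hi0, hh]
    simp only
    rw [Ealias_of_not N _ (not_dvd_bound N _ (by push_cast; omega) (by push_cast; omega)),
      show ((k : ℤ) - k) = 2 * (N : ℤ) * 0 by ring, Ealias_of_eq N hN _ 0 rfl]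
    norm_num
  have hval_even : ∀ ℓ : ℕ, h (i (2 * (ℓ + 1))) = (-1 : ℝ) ^ (ℓ + 1) * a (2 * (ℓ + 1) * N + k) := by
    intro ℓ
    rw [hie (ℓ + 1), hh]
    simp only
    have e1 : ((N * (2 * (ℓ + 1)) + k : ℕ) : ℤ) + k = 2 * N * (ℓ + 1) + 2 * k := by
      push_cast; ring
    have e2 : ((N * (2 * (ℓ + 1)) + k : ℕ) : ℤ) - k = 2 * N * ((ℓ : ℤ) + 1) := by
      push_cast; ring
    have hnd : ¬ (2 * (N : ℤ)) ∣ (2 * N * ((ℓ : ℤ) + 1) + 2 * k) := by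
      intro hd
      have d1 : (2 * (N : ℤ)) ∣ 2 * N * ((ℓ : ℤ) + 1) := dvd_mul_right _ _
      have d2 : (2 * (N : ℤ)) ∣ 2 * (k : ℤ) := by
        have := dvd_sub hd d1
        simpa using this
      exact not_dvd_bound N (2 * k) (by omega) (by omega) d2
    rw [e1, e2, Ealias_of_not N _ hnd, Ealias_of_eq N hN _ ((ℓ : ℤ) + 1) rfl,
      show ((ℓ : ℤ) + 1) = ((ℓ + 1 : ℕ) : ℤ) by push_cast; ring, zpow_natCast]
    rw [show N * (2 * (ℓ + 1)) + k = 2 * (ℓ + 1) * N + k by ring]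
    ring
  have hval_odd : ∀ ℓ : ℕ, h (i (2 * ℓ + 1)) = (-1 : ℝ) ^ (ℓ + 1) * a (2 * (ℓ + 1) * N - k) := by
    intro ℓ
    rw [hio ℓ, hh]
    simp only
    have hkM : k ≤ N * (2 * ℓ + 2) := le_trans (le_of_lt hkN) (Nat.le_mul_of_pos_right N (by omega))
    have e1 : ((N * (2 * ℓ + 2) - k : ℕ) : ℤ) + k = 2 * N * ((ℓ : ℤ) + 1) := by
      rw [Nat.cast_sub hkM]; push_cast; ring
    have e2 : ((N * (2 * ℓ + 2) - k : ℕ) : ℤ) - k = 2 * N * ((ℓ : ℤ) + 1) - 2 * k := by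
      rw [Nat.cast_sub hkM]; push_cast; ring
    have hnd : ¬ (2 * (N : ℤ)) ∣ (2 * N * ((ℓ : ℤ) + 1) - 2 * k) := by
      intro hd
      have d1 : (2 * (N : ℤ)) ∣ 2 * N * ((ℓ : ℤ) + 1) := dvd_mul_right _ _
      have d2 : (2 * (N : ℤ)) ∣ 2 * (k : ℤ) := by
        have := dvd_sub d1 hd
        simpa using this
      exact not_dvd_bound N (2 * k) (by omega) (by omega) d2
    rw [e1, e2, Ealias_of_not N _ hnd, Ealias_of_eq N hN _ ((ℓ : ℤ) + 1) rfl,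
      show ((ℓ : ℤ) + 1) = ((ℓ + 1 : ℕ) : ℤ) by push_cast; ring, zpow_natCast]
    rw [show N * (2 * ℓ + 2) = 2 * (ℓ + 1) * N by ring]
    ring
  -- assemble
  have heq1 : ∑' q : ℕ, h (i q) = ∑' m : ℕ, h m := hiinj.tsum_eq hsupp
  have heq2 : ∑' ℓ : ℕ, h (i (2 * ℓ)) + ∑' ℓ : ℕ, h (i (2 * ℓ + 1)) = ∑' q : ℕ, h (i q) :=
    tsum_even_add_odd (f := fun q : ℕ => h (i q)) Se So
  have heq3 : ∑' ℓ : ℕ, h (i (2 * ℓ)) =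
      a k + ∑' ℓ : ℕ, (-1 : ℝ) ^ (ℓ + 1) * a (2 * (ℓ + 1) * N + k) := by
    rw [Summable.tsum_eq_zero_add Se, hval0]
    congr 1
    exact tsum_congr hval_even
  have heq4 : ∑' ℓ : ℕ, h (i (2 * ℓ + 1)) =
      ∑' ℓ : ℕ, (-1 : ℝ) ^ (ℓ + 1) * a (2 * (ℓ + 1) * N - k) :=
    tsum_congr hval_odd
  have hsplit : ∑' ℓ : ℕ, (-1 : ℝ) ^ (ℓ + 1) *
        (a (2 * (ℓ + 1) * N - k) + a (2 * (ℓ + 1) * N + k))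
      = ∑' ℓ : ℕ, (-1 : ℝ) ^ (ℓ + 1) * a (2 * (ℓ + 1) * N - k)
        + ∑' ℓ : ℕ, (-1 : ℝ) ^ (ℓ + 1) * a (2 * (ℓ + 1) * N + k) := by
    rw [← Summable.tsum_add (summable_sign a ha (inj_minus N k hkN)) (summable_sign a ha (inj_plus N k hN))]
    exact tsum_congr fun ℓ => by ring
  rw [← heq1, ← heq2, heq3, heq4, hsplit]
  ring

lemma tsum_h_zero (a : ℕ → ℝ) (ha : Summable fun j => |a j|) (N : ℕ) (hN : 0 < N) :
    ∑' m : ℕ, a m * (Ealias N m + Ealias N m)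
      = 2 * a 0 + ∑' ℓ : ℕ, (-1 : ℝ) ^ (ℓ + 1) *
          (a (2 * (ℓ + 1) * N - 0) + a (2 * (ℓ + 1) * N + 0)) := by
  set h : ℕ → ℝ := fun m => a m * (Ealias N m + Ealias N m) with hh
  set i : ℕ → ℕ := fun ℓ => N * (2 * ℓ) with hi
  have hiinj : Function.Injective i := by
    intro x y hxy
    simp only [hi] at hxy
    have := Nat.eq_of_mul_eq_mul_left hN hxy
    omega
  have Sh : Summable h := by
    apply Summable.of_norm_bounded (ha.mul_left 2)
    intro m
    rw [Real.norm_eq_abs, abs_mul]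
    have h1 := abs_Ealias_le N m
    have h3 := abs_add_le (Ealias N m) (Ealias N m)
    have h4 := abs_nonneg (a m)
    nlinarith
  have hsupp : Function.support h ⊆ Set.range i := by
    intro m hm
    simp only [Function.mem_support, hh] at hm
    have hE : Ealias N m ≠ 0 := by
      by_contra hc
      rw [hc] at hm
      simp at hm
    have hdvd : (2 * (N : ℤ)) ∣ (m : ℤ) := by
      by_contra hc; exact hE (Ealias_of_not N _ hc)
    have hdvd' : (2 * N) ∣ m := by
      have : ((2 * N : ℕ) : ℤ) ∣ ((m : ℕ) : ℤ) := by push_cast; exact hdvd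
      exact_mod_cast this
    obtain ⟨t, ht⟩ := hdvd'
    refine ⟨t, ?_⟩
    simp only [hi]
    have e : N * (2 * t) = 2 * N * t := by ring
    omega
  have Sc : Summable fun ℓ : ℕ => h (i ℓ) := Sh.comp_injective hiinj
  have hval : ∀ ℓ : ℕ, h (i ℓ) = a (N * (2 * ℓ)) * ((-1 : ℝ) ^ ℓ + (-1 : ℝ) ^ ℓ) := by
    intro ℓ
    simp only [hh, hi]
    rw [Ealias_of_eq N hN _ (ℓ : ℤ) (by push_cast; ring), zpow_natCast]
  have heq1 : ∑' ℓ : ℕ, h (i ℓ) = ∑' m : ℕ, h m := hiinj.tsum_eq hsupp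
  rw [← heq1, Summable.tsum_eq_zero_add Sc, hval 0]
  have hval0 : a (N * (2 * 0)) * ((-1 : ℝ) ^ 0 + (-1 : ℝ) ^ 0) = 2 * a 0 := by
    norm_num
    ring
  rw [hval0]
  congr 1
  have hstep : ∀ ℓ : ℕ, h (i (ℓ + 1)) = (-1 : ℝ) ^ (ℓ + 1) *
      (a (2 * (ℓ + 1) * N - 0) + a (2 * (ℓ + 1) * N + 0)) := by
    intro ℓ
    rw [hval (ℓ + 1), Nat.sub_zero, Nat.add_zero,
      show 2 * (ℓ + 1) * N = N * (2 * (ℓ + 1)) by ring]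
    ring
  exact tsum_congr hstep

lemma abs_mul_cos_cos_le (x c1 c2 : ℝ) : |x * (Real.cos c1 * Real.cos c2)| ≤ |x| := by
  rw [abs_mul, abs_mul]
  have h1 := Real.abs_cos_le_one c1
  have h2 := Real.abs_cos_le_one c2
  have hle : |x| * (|Real.cos c1| * |Real.cos c2|) ≤ |x| * (1 * 1) := by
    gcongr <;> first | exact abs_nonneg _ | exact h1 | exact h2
  linarith


/-- Aliasing formula for interpolation at Chebyshev points of the first kind:
if `f(x) = a₀/2 + ∑_{k≥1} a_k T_k(x)` with `∑ |a_k| < ∞`, and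
`b_k = (2/(n+1)) ∑_{j=0}^n f(x_j) T_k(x_j)` with `x_j = cos((2j+1)π/(2n+2))`,
then `b_k = a_k + ∑_{ℓ=1}^∞ (-1)^ℓ (a_{2ℓ(n+1)-k} + a_{2ℓ(n+1)+k})` for `k ≤ n`. -/
theorem chebyshev_interp_first_kind_aliasing (f : ℝ → ℝ) (a : ℕ → ℝ) (n : ℕ)
    (ha : Summable fun k => |a k|)
    (hf : ∀ x ∈ Set.Icc (-1 : ℝ) 1,
      f x = a 0 / 2 + ∑' k : ℕ, a (k + 1) * (Polynomial.Chebyshev.T ℝ (k + 1)).eval x) :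
    ∀ k ≤ n,
      (2 / ((n : ℝ) + 1)) * ∑ j ∈ Finset.range (n + 1),
          f (Real.cos ((2 * j + 1) * π / (2 * n + 2))) *
            (Polynomial.Chebyshev.T ℝ k).eval (Real.cos ((2 * j + 1) * π / (2 * n + 2))) =
        a k + ∑' ℓ : ℕ, (-1 : ℝ) ^ (ℓ + 1) *
          (a (2 * (ℓ + 1) * (n + 1) - k) + a (2 * (ℓ + 1) * (n + 1) + k)) := by
  intro k hk
  have hN : 0 < n + 1 := n.succ_pos
  set A : ℕ → ℝ := fun j => (2 * (j : ℝ) + 1) * π / (2 * ((n + 1 : ℕ) : ℝ)) with hA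
  have hSa : ∀ j : ℕ, Summable fun m : ℕ =>
      a (m + 1) * (Real.cos (((m + 1 : ℕ) : ℝ) * A j) * Real.cos ((k : ℝ) * A j)) := by
    intro j
    apply Summable.of_norm_bounded (ha.comp_injective Nat.succ_injective)
    intro m
    rw [Real.norm_eq_abs]
    exact abs_mul_cos_cos_le _ _ _
  have key : ∀ j ∈ Finset.range (n + 1),
      f (Real.cos ((2 * j + 1) * π / (2 * n + 2))) *
          (Polynomial.Chebyshev.T ℝ k).eval (Real.cos ((2 * j + 1) * π / (2 * n + 2)))
        = a 0 / 2 * (Real.cos (((0 : ℕ) : ℝ) * A j) * Real.cos ((k : ℝ) * A j))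
          + ∑' m : ℕ, a (m + 1) *
              (Real.cos (((m + 1 : ℕ) : ℝ) * A j) * Real.cos ((k : ℝ) * A j)) := by
    intro j _
    have hang : (2 * (j : ℝ) + 1) * π / (2 * (n : ℝ) + 2) = A j := by
      rw [hA]; push_cast; ring_nf
    rw [hang, hf _ ⟨Real.neg_one_le_cos _, Real.cos_le_one _⟩]
    simp only [Polynomial.Chebyshev.T_real_cos]
    rw [add_mul, ← tsum_mul_right]
    congr 1
    · push_cast
      rw [zero_mul, Real.cos_zero]
      ring
    · apply tsum_congr
      intro m
      push_cast
      ring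
  rw [Finset.sum_congr rfl key, Finset.sum_add_distrib, ← Finset.mul_sum,
    ← Summable.tsum_finsetSum (fun j _ => hSa j)]
  have hcoef : (2 / ((n : ℝ) + 1)) = 2 / (((n + 1 : ℕ)) : ℝ) := by push_cast; ring
  rw [hcoef, mul_add]
  have hstep0 : 2 / (((n + 1 : ℕ)) : ℝ) *
      (a 0 / 2 * ∑ j ∈ Finset.range (n + 1),
        Real.cos (((0 : ℕ) : ℝ) * A j) * Real.cos ((k : ℝ) * A j))
      = a 0 / 2 * (Ealias (n + 1) (((0 : ℕ) : ℤ) + k) + Ealias (n + 1) (((0 : ℕ) : ℤ) - k)) := by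
    rw [← Ccos (n + 1) hN k 0]
    ring
  have hstep1 : 2 / (((n + 1 : ℕ)) : ℝ) *
      (∑' m : ℕ, ∑ j ∈ Finset.range (n + 1),
        a (m + 1) * (Real.cos (((m + 1 : ℕ) : ℝ) * A j) * Real.cos ((k : ℝ) * A j)))
      = ∑' m : ℕ, a (m + 1) *
          (Ealias (n + 1) (((m + 1 : ℕ) : ℤ) + k) + Ealias (n + 1) (((m + 1 : ℕ) : ℤ) - k)) := by
    rw [← tsum_mul_left]
    apply tsum_congr
    intro m
    rw [← Ccos (n + 1) hN k (m + 1), ← Finset.mul_sum]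
    ring
  rw [hstep0, hstep1]
  set h : ℕ → ℝ := fun m => a m *
    (Ealias (n + 1) ((m : ℤ) + k) + Ealias (n + 1) ((m : ℤ) - k)) with hh
  have Sh : Summable h := summable_h a ha (n + 1) k
  have hshift : ∑' m : ℕ, a (m + 1) *
      (Ealias (n + 1) (((m + 1 : ℕ) : ℤ) + k) + Ealias (n + 1) (((m + 1 : ℕ) : ℤ) - k))
      = (∑' m : ℕ, h m) - h 0 := by
    rw [Summable.tsum_eq_zero_add Sh]
    simp only [hh]
    ring
  rw [hshift]
  have hh0 : a 0 / 2 * (Ealias (n + 1) (((0 : ℕ) : ℤ) + k) + Ealias (n + 1) (((0 : ℕ) : ℤ) - k))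
      = h 0 / 2 := by
    simp only [hh]
    ring
  rw [hh0]
  rcases Nat.eq_zero_or_pos k with rfl | hk1
  · -- k = 0
    have hzero : ∀ m : ℕ, h m = a m * (Ealias (n + 1) m + Ealias (n + 1) m) := by
      intro m
      simp only [hh, Nat.cast_zero, add_zero, sub_zero]
    have hsum : ∑' m : ℕ, h m = 2 * a 0 + ∑' ℓ : ℕ, (-1 : ℝ) ^ (ℓ + 1) *
        (a (2 * (ℓ + 1) * (n + 1) - 0) + a (2 * (ℓ + 1) * (n + 1) + 0)) := by
      rw [tsum_congr hzero]
      exact tsum_h_zero a ha (n + 1) hN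
    have hv0 : h 0 = 2 * a 0 := by
      rw [hzero 0, Ealias_of_eq (n + 1) hN _ 0 (by norm_num), zpow_zero]
      push_cast
      ring
    rw [hsum, hv0]
    ring
  · -- k ≥ 1
    have hv0 : h 0 = 0 := by
      simp only [hh]
      rw [Ealias_of_not (n + 1) _ (not_dvd_bound (n + 1) _ (by push_cast; omega)
          (by push_cast; omega)),
        Ealias_of_not (n + 1) _ (by
          rw [show ((0 : ℕ) : ℤ) - k = -(k : ℤ) by push_cast; ring, dvd_neg]
          exact not_dvd_bound (n + 1) _ (by push_cast; omega) (by push_cast; omega))]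
      ring
    rw [hv0, tsum_h_pos a ha (n + 1) k hk1 (by omega)]
    ring
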